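/- For all x with 0 < |x| ≤ π/2, one has (cos x + α - 1)/α ≤ sin x / x with α = π/(π-2), and this constant is best possible. -/

import Mathlib

open Real Set

private lemma aux_nonneg {f f' : ℝ → ℝ} (hf : ∀ t, HasDerivAt f (f' t) t)
    (h0 : f 0 = 0) (hd : ∀ t, 0 ≤ t → 0 ≤ f' t) {x : ℝ} (hx : 0 ≤ x) : 0 ≤ f x := by
  have hmono : MonotoneOn f (Ici (0:ℝ)) := by
    apply monotoneOn_of_hasDerivWithinAt_nonneg (convex_Ici 0)
      (fun t _ => (hf t).continuousAt.continuousWithinAt)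
      (fun t _ => (hf t).hasDerivWithinAt)
    intro t ht
    exact hd t (le_of_lt (by simpa using ht))
  have := hmono self_mem_Ici hx hx
  linarith [this, h0.symm ▸ this]

private lemma hd_pow (n : ℕ) (c : ℝ) (t : ℝ) :
    HasDerivAt (fun t : ℝ => t^n/c) ((n : ℝ)*t^(n-1)/c) t := by
  simpa using (hasDerivAt_pow n t).div_const c

private lemma sin_ge3 {x : ℝ} (hx : 0 ≤ x) : x - x^3/6 ≤ Real.sin x := by
  have h := aux_nonneg (f := fun t => Real.sin t - t + t^3/6)
    (f' := fun t => Real.cos t - 1 + t^2/2) (fun t => by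
      have := ((Real.hasDerivAt_sin t).sub (hasDerivAt_id t)).add (hd_pow 3 6 t)
      exact this.congr_deriv (by norm_num; ring))
    (by norm_num) (fun t _ => by nlinarith [Real.one_sub_sq_div_two_le_cos (x := t)]) hx
  linarith

private lemma cos_le4 {x : ℝ} (hx : 0 ≤ x) : Real.cos x ≤ 1 - x^2/2 + x^4/24 := by
  have h := aux_nonneg (f := fun t => 1 - t^2/2 + t^4/24 - Real.cos t)
    (f' := fun t => -t + t^3/6 + Real.sin t) (fun t => by
      have := (((hasDerivAt_const t (1:ℝ)).sub (hd_pow 2 2 t)).add (hd_pow 4 24 t)).sub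
        (Real.hasDerivAt_cos t)
      exact this.congr_deriv (by norm_num; ring))
    (by norm_num) (fun t ht => by nlinarith [sin_ge3 ht]) hx
  linarith

private lemma sin_le5 {x : ℝ} (hx : 0 ≤ x) : Real.sin x ≤ x - x^3/6 + x^5/120 := by
  have h := aux_nonneg (f := fun t => t - t^3/6 + t^5/120 - Real.sin t)
    (f' := fun t => 1 - t^2/2 + t^4/24 - Real.cos t) (fun t => by
      have := (((hasDerivAt_id t).sub (hd_pow 3 6 t)).add (hd_pow 5 120 t)).sub
        (Real.hasDerivAt_sin t)
      exact this.congr_deriv (by norm_num; ring))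
    (by norm_num) (fun t ht => by nlinarith [cos_le4 ht]) hx
  linarith

private lemma cos_ge6 {x : ℝ} (hx : 0 ≤ x) :
    1 - x^2/2 + x^4/24 - x^6/720 ≤ Real.cos x := by
  have h := aux_nonneg (f := fun t => Real.cos t - 1 + t^2/2 - t^4/24 + t^6/720)
    (f' := fun t => -Real.sin t + t - t^3/6 + t^5/120) (fun t => by
      have := ((((Real.hasDerivAt_cos t).sub (hasDerivAt_const t (1:ℝ))).add
        (hd_pow 2 2 t)).sub (hd_pow 4 24 t)).add (hd_pow 6 720 t)
      exact this.congr_deriv (by norm_num; ring))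
    (by norm_num) (fun t ht => by nlinarith [sin_le5 ht]) hx
  linarith

private lemma sin_ge7 {x : ℝ} (hx : 0 ≤ x) :
    x - x^3/6 + x^5/120 - x^7/5040 ≤ Real.sin x := by
  have h := aux_nonneg (f := fun t => Real.sin t - t + t^3/6 - t^5/120 + t^7/5040)
    (f' := fun t => Real.cos t - 1 + t^2/2 - t^4/24 + t^6/720) (fun t => by
      have := ((((Real.hasDerivAt_sin t).sub (hasDerivAt_id t)).add
        (hd_pow 3 6 t)).sub (hd_pow 5 120 t)).add (hd_pow 7 5040 t)
      exact this.congr_deriv (by norm_num; ring))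
    (by norm_num) (fun t ht => by nlinarith [cos_ge6 ht]) hx
  linarith

private lemma cos_le8 {x : ℝ} (hx : 0 ≤ x) :
    Real.cos x ≤ 1 - x^2/2 + x^4/24 - x^6/720 + x^8/40320 := by
  have h := aux_nonneg
    (f := fun t => 1 - t^2/2 + t^4/24 - t^6/720 + t^8/40320 - Real.cos t)
    (f' := fun t => -t + t^3/6 - t^5/120 + t^7/5040 + Real.sin t) (fun t => by
      have := (((((hasDerivAt_const t (1:ℝ)).sub (hd_pow 2 2 t)).add
        (hd_pow 4 24 t)).sub (hd_pow 6 720 t)).add (hd_pow 8 40320 t)).sub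
        (Real.hasDerivAt_cos t)
      exact this.congr_deriv (by norm_num; ring))
    (by norm_num) (fun t ht => by nlinarith [sin_ge7 ht]) hx
  linarith

/-- Main key inequality: π sin x ≥ ((π-2) cos x + 2) x on (0, π/2]. -/
private lemma key_ineq {x : ℝ} (hx : 0 < x) (hx2 : x ≤ π / 2) :
    ((π - 2) * Real.cos x + 2) * x ≤ π * Real.sin x := by
  have hpi1 := Real.pi_gt_d6
  have hpi2 := Real.pi_lt_d6
  rcases le_or_gt x 1.5 with hcase | hcase
  · -- Taylor region
    have hs := sin_ge7 hx.le
    have hc := cos_le8 hx.le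
    have hu2 : x^2 ≤ 2.25 := by nlinarith
    have hQ : 0 ≤ (π-3)/3 - (4*π-10)/120*x^2 + (6*π-14)/5040*(x^2)^2
        - (π-2)/40320*(x^2)^3 := by
      nlinarith [mul_nonneg (sq_nonneg x) (sub_nonneg.2 hu2), sq_nonneg (x^2),
        mul_nonneg (mul_nonneg (sq_nonneg x) (sq_nonneg x)) (sub_nonneg.2 hu2),
        mul_nonneg (mul_nonneg (sq_nonneg x) (sq_nonneg x)) (sq_nonneg x),
        sq_nonneg (x^2 - 2.25)]
    have hP : 0 ≤ x^3 * ((π-3)/3 - (4*π-10)/120*x^2 + (6*π-14)/5040*(x^2)^2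
        - (π-2)/40320*(x^2)^3) := mul_nonneg (pow_nonneg hx.le 3) hQ
    have h1 : π * (x - x^3/6 + x^5/120 - x^7/5040) ≤ π * Real.sin x :=
      mul_le_mul_of_nonneg_left hs Real.pi_pos.le
    have hxc : (π - 2) * x * Real.cos x ≤ (π - 2) * x *
        (1 - x^2/2 + x^4/24 - x^6/720 + x^8/40320) :=
      mul_le_mul_of_nonneg_left hc (by nlinarith)
    have hid : π * (x - x^3/6 + x^5/120 - x^7/5040)
        - ((π-2)*x*(1 - x^2/2 + x^4/24 - x^6/720 + x^8/40320) + 2*x)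
        = x^3 * ((π-3)/3 - (4*π-10)/120*x^2 + (6*π-14)/5040*(x^2)^2
          - (π-2)/40320*(x^2)^3) := by ring
    have hg : ((π - 2) * Real.cos x + 2) * x = (π - 2) * x * Real.cos x + 2 * x := by
      ring
    rw [hg]
    linarith [hP, h1, hxc, hid]
  · -- monotone tail region: f is antitone on [1.5, π/2]
    set f : ℝ → ℝ := fun t => π * Real.sin t - ((π - 2) * Real.cos t + 2) * t with hf
    have hderiv : ∀ t : ℝ, HasDerivAt f
        (2 * Real.cos t + (π - 2) * t * Real.sin t - 2) t := by
      intro t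
      have h1 : HasDerivAt (fun t : ℝ => π * Real.sin t) (π * Real.cos t) t :=
        (Real.hasDerivAt_sin t).const_mul π
      have h2 : HasDerivAt (fun t : ℝ => ((π - 2) * Real.cos t + 2) * t)
          (((π - 2) * (-Real.sin t)) * t + ((π - 2) * Real.cos t + 2) * 1) t := by
        exact (((Real.hasDerivAt_cos t).const_mul (π - 2)).add_const 2).mul (hasDerivAt_id t)
      have := h1.sub h2
      exact this.congr_deriv (by ring)
    have hanti : AntitoneOn f (Icc 1.5 (π / 2)) := by
      apply antitoneOn_of_hasDerivWithinAt_nonpos (convex_Icc _ _)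
        (fun t _ => (hderiv t).continuousAt.continuousWithinAt)
        (fun t _ => (hderiv t).hasDerivWithinAt)
      intro t ht
      rw [interior_Icc] at ht
      obtain ⟨ht1, ht2⟩ := ht
      have ht0 : (0:ℝ) ≤ t := by linarith
      have hc := cos_le4 ht0
      have hs := sin_le5 ht0
      have htpi : t ≤ 1.5707965 := by linarith
      have hu1 : 2.25 ≤ t^2 := by nlinarith
      have hu2 : t^2 ≤ 2.46741 := by nlinarith
      have hR : (π-3) + (1/12-(π-2)/6)*t^2 + (π-2)/120*(t^2)^2 ≤ 0 := by
        nlinarith [mul_nonneg (sub_nonneg.2 hu1) (sub_nonneg.2 hu2)]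
      have hts : (π-2)*t*Real.sin t ≤ (π-2)*t*(t - t^3/6 + t^5/120) :=
        mul_le_mul_of_nonneg_left hs (by nlinarith)
      have hid : 2*(1 - t^2/2 + t^4/24) + (π-2)*t*(t - t^3/6 + t^5/120) - 2
          = t^2 * ((π-3) + (1/12-(π-2)/6)*t^2 + (π-2)/120*(t^2)^2) := by ring
      linarith [hc, hts, hid, mul_nonpos_of_nonneg_of_nonpos (sq_nonneg t) hR]
    have hmem1 : x ∈ Icc (1.5:ℝ) (π/2) := ⟨hcase.le, hx2⟩
    have hmem2 : π/2 ∈ Icc (1.5:ℝ) (π/2) := ⟨by linarith, le_refl _⟩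
    have hend : f (π/2) = 0 := by
      simp [hf, Real.sin_pi_div_two, Real.cos_pi_div_two]; ring
    have := hanti hmem1 hmem2 hx2
    rw [hend] at this
    simpa [hf, sub_nonneg] using this

theorem stmt0 :
    (∀ x : ℝ, 0 < |x| → |x| ≤ π / 2 →
      (Real.cos x + π / (π - 2) - 1) / (π / (π - 2)) ≤ Real.sin x / x) ∧
    (∀ β : ℝ, 0 < β →
      (∀ x : ℝ, 0 < |x| → |x| ≤ π / 2 →
        (Real.cos x + β - 1) / β ≤ Real.sin x / x) → β ≤ π / (π - 2)) := by
  have hpi1 := Real.pi_gt_d6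
  have hpi2 := Real.pi_lt_d6
  have h2 : (0:ℝ) < π - 2 := by linarith
  constructor
  · intro x hx1 hx2
    set y := |x| with hy
    have hy0 : 0 < y := hx1
    have hsin : Real.sin x / x = Real.sin y / y := by
      rcases abs_cases x with ⟨h, _⟩ | ⟨h, _⟩
      · rw [hy, h]
      · rw [hy, h, Real.sin_neg, neg_div_neg_eq]
    have hcos : Real.cos x = Real.cos y := (Real.cos_abs x).symm
    rw [hsin, hcos]
    have hkey := key_ineq hy0 hx2
    have hLHS : (Real.cos y + π / (π - 2) - 1) / (π / (π - 2))
        = ((π - 2) * Real.cos y + 2) / π := by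
      field_simp
      ring
    rw [hLHS, div_le_div_iff₀ (by linarith) hy0]
    linarith
  · intro β hβ h
    have h1 := h (π/2) (by rw [abs_of_pos (by linarith)]; linarith)
      (by rw [abs_of_pos (by linarith)])
    rw [Real.sin_pi_div_two, Real.cos_pi_div_two] at h1
    rw [div_le_div_iff₀ hβ (by linarith : (0:ℝ) < π/2)] at h1
    rw [le_div_iff₀ h2]
    nlinarith
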